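/- arXiv:1703.07697 — 2 statements merged into one kernel-verified Lean document; each statement's English description precedes it below -/
import Mathlib

section
/- Let Ā ∈ ℝ^{s×s} be similar via an invertible real matrix Q to the block matrix [[0, D],[-D^T, 0]] where D ∈ ℝ^{m×(s-m)} is diagonal with diagonal entries σ_1,...,σ_{s-m} ≥ 0 and m = ⌈s/2⌉. Then for any J ∈ ℝ^{d×d} and h ∈ ℝ, the matrix I_{sd} - h(Ā ⊗ J) is invertible if and only if all the matrices I_d + h²σ_i²J², i = 1,...,s-m, are invertible. -/
open Matrix Kronecker

theorem invertibility_via_block_diagonalization (s m d : ℕ) (hm : m = (s + 1) / 2)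
    (Abar : Matrix (Fin s) (Fin s) ℝ)
    (σ : Fin (s - m) → ℝ) (hσ : ∀ i, 0 ≤ σ i)
    (D : Matrix (Fin m) (Fin (s - m)) ℝ)
    (hD : ∀ i j, D i j = if (i : ℕ) = (j : ℕ) then σ j else 0)
    (Q : Matrix (Fin s) (Fin s) ℝ) (hQ : IsUnit Q)
    (hsim : Q⁻¹ * Abar * Q =
      Matrix.reindex (finSumFinEquiv.trans (finCongr (by omega)))
        (finSumFinEquiv.trans (finCongr (by omega)))
        (Matrix.fromBlocks 0 D (-Dᵀ) 0))
    (J : Matrix (Fin d) (Fin d) ℝ) (h : ℝ) :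
    IsUnit ((1 : Matrix (Fin s × Fin d) (Fin s × Fin d) ℝ) - h • (Abar ⊗ₖ J)) ↔
      ∀ i : Fin (s - m),
        IsUnit ((1 : Matrix (Fin d) (Fin d) ℝ) + (h ^ 2 * σ i ^ 2) • (J * J)) := by
  classical
  have hQdet : IsUnit Q.det := (Matrix.isUnit_iff_isUnit_det Q).mp hQ
  set e : Fin m ⊕ Fin (s - m) ≃ Fin s := finSumFinEquiv.trans (finCongr (by omega)) with he
  set B : Matrix (Fin m ⊕ Fin (s - m)) (Fin m ⊕ Fin (s - m)) ℝ :=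
    Matrix.fromBlocks 0 D (-Dᵀ) 0 with hB
  set M : Matrix (Fin s × Fin d) (Fin s × Fin d) ℝ := 1 - h • (Abar ⊗ₖ J) with hM
  -- Step 4 : DᵀD is diagonal
  have hDTD : Dᵀ * D = Matrix.diagonal (fun i => σ i ^ 2) := by
    ext i j
    have hi : (i : ℕ) < m := by omega
    by_cases hij : i = j
    · subst hij
      rw [Matrix.mul_apply, Matrix.diagonal_apply_eq]
      have hterm : ∀ k : Fin m, Dᵀ i k * D k i
          = if k = (⟨(i : ℕ), hi⟩ : Fin m) then σ i ^ 2 else 0 := by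
        intro k
        rw [Matrix.transpose_apply, hD]
        by_cases hk : (k : ℕ) = (i : ℕ)
        · rw [if_pos hk, if_pos (Fin.ext hk)]; ring
        · rw [if_neg hk, if_neg (fun hkk => hk (congrArg Fin.val hkk)), zero_mul]
      rw [Finset.sum_congr rfl (fun k _ => hterm k),
        Finset.sum_ite_eq' Finset.univ _ (fun _ => σ i ^ 2), if_pos (Finset.mem_univ _)]
    · rw [Matrix.mul_apply, Matrix.diagonal_apply_ne _ hij]
      apply Finset.sum_eq_zero
      intro k _
      rw [Matrix.transpose_apply, hD, hD]
      by_cases hk1 : (k : ℕ) = (i : ℕ)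
      · rw [if_neg (fun hk2 : (k : ℕ) = (j : ℕ) => hij (Fin.ext (hk1 ▸ hk2))), mul_zero]
      · rw [if_neg hk1, zero_mul]
  -- Step 1 : conjugation
  have h1 : (Q⁻¹ ⊗ₖ (1 : Matrix (Fin d) (Fin d) ℝ)) * (Abar ⊗ₖ J) * (Q ⊗ₖ 1)
      = (Q⁻¹ * Abar * Q) ⊗ₖ J := by
    rw [← Matrix.mul_kronecker_mul, ← Matrix.mul_kronecker_mul, Matrix.one_mul, Matrix.mul_one]
  have c1 : (Q⁻¹ ⊗ₖ (1 : Matrix (Fin d) (Fin d) ℝ)) * M * (Q ⊗ₖ 1)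
      = 1 - h • ((Q⁻¹ * Abar * Q) ⊗ₖ J) := by
    rw [hM, mul_sub, mul_one, sub_mul, mul_smul_comm, smul_mul_assoc, h1,
      ← Matrix.mul_kronecker_mul, Matrix.nonsing_inv_mul Q hQdet, Matrix.one_mul,
      Matrix.one_kronecker_one]
  have detc1 : M.det = ((1 : Matrix (Fin s × Fin d) (Fin s × Fin d) ℝ)
      - h • ((Q⁻¹ * Abar * Q) ⊗ₖ J)).det := by
    calc M.det = 1 * M.det := (one_mul _).symm
    _ = ((Q⁻¹ * Q) ⊗ₖ ((1 : Matrix (Fin d) (Fin d) ℝ) * 1)).det * M.det := by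
        rw [Matrix.nonsing_inv_mul Q hQdet, Matrix.one_mul, Matrix.one_kronecker_one,
          Matrix.det_one]
    _ = ((Q⁻¹ ⊗ₖ (1 : Matrix (Fin d) (Fin d) ℝ)) * M * (Q ⊗ₖ 1)).det := by
        rw [Matrix.mul_kronecker_mul, Matrix.det_mul, Matrix.det_mul, Matrix.det_mul]; ring
    _ = _ := by rw [c1]
  rw [hsim] at detc1
  -- Step 2 : strip off the reindex
  set ε : ((Fin m ⊕ Fin (s - m)) × Fin d) ≃ (Fin s × Fin d) :=
    (e.prodCongr (Equiv.refl (Fin d))) with hε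
  have c2 : ((1 : Matrix (Fin s × Fin d) (Fin s × Fin d) ℝ)
        - h • ((Matrix.reindex e e B) ⊗ₖ J)).submatrix ε ε
      = 1 - h • (B ⊗ₖ J) := by
    ext ⟨x, i⟩ ⟨y, j⟩
    simp only [Matrix.submatrix_apply, Matrix.sub_apply, Matrix.smul_apply,
      Matrix.one_apply, Matrix.kroneckerMap_apply, Matrix.reindex_apply, hε,
      Equiv.prodCongr_apply, Prod.map, Equiv.refl_apply, Equiv.symm_apply_apply,
      Prod.mk.injEq, EmbeddingLike.apply_eq_iff_eq, smul_eq_mul]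
  have detc2 : M.det = ((1 : Matrix ((Fin m ⊕ Fin (s - m)) × Fin d)
      ((Fin m ⊕ Fin (s - m)) × Fin d) ℝ) - h • (B ⊗ₖ J)).det := by
    rw [detc1, ← c2, Matrix.det_submatrix_equiv_self]
  -- Step 3 : block structure
  set δ := Equiv.sumProdDistrib (Fin m) (Fin (s - m)) (Fin d) with hδ
  have c3 : ((1 : Matrix ((Fin m ⊕ Fin (s - m)) × Fin d)
        ((Fin m ⊕ Fin (s - m)) × Fin d) ℝ) - h • (B ⊗ₖ J)).submatrix δ.symm δ.symm
      = Matrix.fromBlocks 1 (-(h • (D ⊗ₖ J))) (h • (Dᵀ ⊗ₖ J)) 1 := by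
    ext p q
    rcases p with ⟨a, i⟩ | ⟨a, i⟩ <;> rcases q with ⟨b, j⟩ | ⟨b, j⟩ <;>
      simp [hB, hδ, Equiv.sumProdDistrib_symm_apply_left,
        Equiv.sumProdDistrib_symm_apply_right, Matrix.one_apply, Prod.ext_iff,
        mul_comm] <;> ring
  have detc3 : M.det = ((1 : Matrix (Fin (s - m) × Fin d) (Fin (s - m) × Fin d) ℝ)
      + (h ^ 2) • ((Dᵀ * D) ⊗ₖ (J * J))).det := by
    rw [detc2, ← Matrix.det_submatrix_equiv_self δ.symm, c3, Matrix.det_fromBlocks_one₁₁]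
    congr 1
    rw [Matrix.mul_kronecker_mul]
    rw [show (h • Dᵀ ⊗ₖ J) * -(h • D ⊗ₖ J) = -((h ^ 2) • ((Dᵀ ⊗ₖ J) * (D ⊗ₖ J))) by
      rw [Matrix.mul_neg, Matrix.smul_mul, Matrix.mul_smul, smul_smul]; ring_nf]
    rw [sub_neg_eq_add]
  rw [hDTD] at detc3
  -- Step 5 : block diagonal
  set pc := Equiv.prodComm (Fin d) (Fin (s - m)) with hpc
  have c5 : ((1 : Matrix (Fin (s - m) × Fin d) (Fin (s - m) × Fin d) ℝ)
        + (h ^ 2) • ((Matrix.diagonal (fun i => σ i ^ 2)) ⊗ₖ (J * J))).submatrix pc pc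
      = Matrix.blockDiagonal (fun a : Fin (s - m) =>
          (1 : Matrix (Fin d) (Fin d) ℝ) + (h ^ 2 * σ a ^ 2) • (J * J)) := by
    ext ⟨i, a⟩ ⟨j, b⟩
    simp only [Matrix.submatrix_apply, hpc, Equiv.prodComm_apply, Prod.swap_prod_mk,
      Matrix.add_apply, Matrix.smul_apply, Matrix.kroneckerMap_apply,
      Matrix.blockDiagonal_apply, Matrix.one_apply, Prod.mk.injEq, smul_eq_mul]
    by_cases hab : a = b
    · subst hab
      rw [if_pos rfl, Matrix.diagonal_apply_eq]
      simp only [true_and]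
      split_ifs <;> ring
    · rw [if_neg hab, Matrix.diagonal_apply_ne _ hab,
        if_neg (fun hc => hab hc.1)]
      ring
  have detfinal : M.det = ∏ a : Fin (s - m),
      ((1 : Matrix (Fin d) (Fin d) ℝ) + (h ^ 2 * σ a ^ 2) • (J * J)).det := by
    rw [detc3, ← Matrix.det_submatrix_equiv_self pc, c5, Matrix.det_blockDiagonal]
  rw [Matrix.isUnit_iff_isUnit_det, detfinal, isUnit_iff_ne_zero, Finset.prod_ne_zero_iff]
  constructor
  · intro H i
    rw [Matrix.isUnit_iff_isUnit_det, isUnit_iff_ne_zero]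
    exact H i (Finset.mem_univ i)
  · intro H i _
    have := H i
    rwa [Matrix.isUnit_iff_isUnit_det, isUnit_iff_ne_zero] at this
end

section
/- Let b_i, a_{ij} (1 ≤ i,j ≤ s) satisfy the symplecticity condition b_i a_{ij} + b_j a_{ji} = b_i b_j. Then for any differentiable curve satisfying the IRK equations applied to a system ẏ = f(y) with a quadratic invariant Q(y) = y^T G y (G symmetric, with ∇Q(y)·f(y) = 0 for all y), the numerical update y₁ = y₀ + h Σ_i b_i f(Y_i), Y_i = y₀ + h Σ_j a_{ij} f(Y_j), satisfies Q(y₁) = Q(y₀). -/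
open Matrix

theorem symplectic_IRK_preserves_quadratic_invariant (s d : ℕ)
    (a : Fin s → Fin s → ℝ) (b : Fin s → ℝ)
    (hsympl : ∀ i j, b i * a i j + b j * a j i = b i * b j)
    (G : Matrix (Fin d) (Fin d) ℝ) (hG : Gᵀ = G)
    (f : (Fin d → ℝ) → (Fin d → ℝ))
    (hinv : ∀ y : Fin d → ℝ, y ⬝ᵥ G.mulVec (f y) + (f y) ⬝ᵥ G.mulVec y = 0)
    (h : ℝ) (y₀ y₁ : Fin d → ℝ) (Y : Fin s → Fin d → ℝ)
    (hstage : ∀ i, Y i = y₀ + h • ∑ j, a i j • f (Y j))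
    (hupd : y₁ = y₀ + h • ∑ i, b i • f (Y i)) :
    y₁ ⬝ᵥ G.mulVec y₁ = y₀ ⬝ᵥ G.mulVec y₀ := by
  set F : Fin s → Fin d → ℝ := fun i => f (Y i) with hF
  have hBsym : ∀ x y : Fin d → ℝ, x ⬝ᵥ G.mulVec y = y ⬝ᵥ G.mulVec x := by
    intro x y
    rw [Matrix.dotProduct_mulVec, ← Matrix.mulVec_transpose, hG, dotProduct_comm]
  have hzero : ∀ y : Fin d → ℝ, y ⬝ᵥ G.mulVec (f y) = 0 := by
    intro y
    have h1 := hinv y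
    rw [hBsym (f y) y] at h1
    linarith
  have hsumr : ∀ (u : Fin d → ℝ) (c : Fin s → ℝ),
      u ⬝ᵥ G.mulVec (∑ i, c i • F i) = ∑ i, c i * (u ⬝ᵥ G.mulVec (F i)) := by
    intro u c
    simp only [Matrix.mulVec, dotProduct, Finset.sum_apply, Pi.smul_apply,
      smul_eq_mul, Finset.mul_sum, Finset.sum_mul]
    rw [Finset.sum_comm]
    conv_lhs => enter [2, x]; rw [Finset.sum_comm]
    rw [Finset.sum_comm]
    apply Finset.sum_congr rfl; intro i _
    rw [Finset.sum_comm]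
    apply Finset.sum_congr rfl; intro k _
    apply Finset.sum_congr rfl; intro l _
    ring
  set C : Fin s → Fin s → ℝ := fun i j => F i ⬝ᵥ G.mulVec (F j) with hC
  have hCsym : ∀ i j, C i j = C j i := fun i j => hBsym _ _
  -- expansion of a quadratic form at a shifted point
  have hexp : ∀ (u w : Fin d → ℝ),
      (u + h • w) ⬝ᵥ G.mulVec (u + h • w)
        = u ⬝ᵥ G.mulVec u + 2 * h * (u ⬝ᵥ G.mulVec w) + h ^ 2 * (w ⬝ᵥ G.mulVec w) := by
    intro u w
    have := hBsym w u
    simp only [Matrix.mulVec_add, Matrix.mulVec_smul, dotProduct_add,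
      add_dotProduct, smul_dotProduct, dotProduct_smul, smul_eq_mul]
    rw [this]; ring
  have hy0F : ∀ i, y₀ ⬝ᵥ G.mulVec (F i) = -h * ∑ j, a i j * C i j := by
    intro i
    have h0 : F i ⬝ᵥ G.mulVec (y₀ + h • ∑ j, a i j • F j) = 0 := by
      rw [show (∑ j, a i j • F j) = ∑ j, a i j • f (Y j) from rfl, ← hstage i, ← hBsym]
      exact hzero (Y i)
    simp only [Matrix.mulVec_add, dotProduct_add, Matrix.mulVec_smul,
      dotProduct_smul, smul_eq_mul] at h0
    rw [hsumr] at h0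
    rw [hBsym]
    simp only [hC]
    linarith [h0]
  set W : Fin d → ℝ := ∑ i, b i • F i with hW
  have hWy0 : y₀ ⬝ᵥ G.mulVec W = -h * ∑ i, ∑ j, b i * (a i j * C i j) := by
    rw [hW, hsumr]
    simp only [hy0F, Finset.mul_sum]
    apply Finset.sum_congr rfl; intro i _
    apply Finset.sum_congr rfl; intro j _
    ring
  have hWW : W ⬝ᵥ G.mulVec W = ∑ i, ∑ j, b i * b j * C i j := by
    rw [hW, hsumr]
    apply Finset.sum_congr rfl; intro i _
    rw [hBsym, hsumr, Finset.mul_sum]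
    apply Finset.sum_congr rfl; intro j _
    simp only [hC]
    ring
  have key : ∑ i, ∑ j, b i * b j * C i j = 2 * ∑ i, ∑ j, b i * (a i j * C i j) := by
    have h1 : ∑ i, ∑ j, b i * b j * C i j
        = ∑ i, ∑ j, (b i * (a i j * C i j) + b j * (a j i * C i j)) := by
      apply Finset.sum_congr rfl; intro i _
      apply Finset.sum_congr rfl; intro j _
      rw [← hsympl i j]; ring
    have h2 : ∑ i, ∑ j, b j * (a j i * C i j) = ∑ i, ∑ j, b i * (a i j * C i j) := by
      rw [Finset.sum_comm]
      apply Finset.sum_congr rfl; intro i _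
      apply Finset.sum_congr rfl; intro j _
      rw [hCsym j i]
    rw [h1]
    simp only [Finset.sum_add_distrib]
    rw [h2]; ring
  rw [hupd, hexp y₀ W, hWy0, hWW, key]
  ring
end
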